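/- Let h : ℝ → ℝ be continuous and strictly positive, and let v be its harmonic mean: v(k) = k / (∫₀ᵏ dy/h(y)) for k ≠ 0 and v(0) = h(0). If h is differentiable at 0, then v is differentiable at 0 and v'(0) = (1/2) h'(0) (the '1/2-skew rule'). -/

import Mathlib

open intervalIntegral Filter Topology

theorem one_half_skew_rule
    (h : ℝ → ℝ) (hh : Continuous h) (hpos : ∀ k, 0 < h k)
    (h' : ℝ) (hdiff : HasDerivAt h h' 0)
    (v : ℝ → ℝ)
    (hv0 : v 0 = h 0)
    (hvk : ∀ k ≠ 0, v k = k / ∫ y in (0:ℝ)..k, (h y)⁻¹) :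
    HasDerivAt v (h' / 2) 0 := by
  set h0 : ℝ := h 0 with hh0
  have h0ne : h0 ≠ 0 := (hpos 0).ne'
  set c : ℝ := -h' / h0 ^ 2 with hc
  -- g = 1/h - 1/h0
  set g : ℝ → ℝ := fun y => (h y)⁻¹ - h0⁻¹ with hg
  have gcont : Continuous g := (hh.inv₀ fun y => (hpos y).ne').sub continuous_const
  have g0 : g 0 = 0 := by simp [hg, hh0]
  have gderiv : HasDerivAt g c 0 := by
    simpa [hc, hg, hh0] using (hdiff.inv h0ne).sub_const h0⁻¹
  set F : ℝ → ℝ := fun k => ∫ y in (0:ℝ)..k, (h y)⁻¹ with hF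
  set G : ℝ → ℝ := fun k => ∫ y in (0:ℝ)..k, g y with hG
  have Gderiv : ∀ k, HasDerivAt G (g k) k := by
    intro k
    exact intervalIntegral.integral_hasDerivAt_right
      (gcont.intervalIntegrable 0 k)
      (gcont.stronglyMeasurable.stronglyMeasurableAtFilter)
      gcont.continuousAt
  have GF : ∀ k, G k = F k - k * h0⁻¹ := by
    intro k
    simp only [hG, hg, hF]
    rw [intervalIntegral.integral_sub (f := fun y => (h y)⁻¹) (g := fun _ => h0⁻¹) ((hh.inv₀ fun y => (hpos y).ne').intervalIntegrable 0 k)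
      (intervalIntegrable_const)]
    simp [mul_comm]
  -- slope of g at 0 tends to c
  have gslope : Tendsto (fun k => g k / k) (𝓝[≠] (0:ℝ)) (𝓝 c) := by
    have := hasDerivAt_iff_tendsto_slope.mp gderiv
    refine this.congr fun k => ?_
    simp [slope_def_field, g0, div_eq_mul_inv]
  -- L'Hopital : G k / k ^ 2 → c / 2
  have hlim : Tendsto (fun k => G k / k ^ 2) (𝓝[≠] (0:ℝ)) (𝓝 (c / 2)) := by
    apply HasDerivAt.lhopital_zero_nhdsNE
      (f' := g) (g' := fun k => 2 * k)
    · exact Eventually.of_forall fun x => Gderiv x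
    · exact Eventually.of_forall fun x => by
        simpa [mul_comm] using (hasDerivAt_pow 2 x)
    · filter_upwards [self_mem_nhdsWithin] with x hx
      simpa using hx
    · have hG0 : G 0 = 0 := by simp [hG]
      exact tendsto_nhdsWithin_of_tendsto_nhds
        (by simpa [hG0] using (Gderiv 0).continuousAt.tendsto)
    · have : Tendsto (fun k : ℝ => k ^ 2) (𝓝 0) (𝓝 ((0:ℝ) ^ 2)) :=
        (continuous_pow 2).tendsto 0
      simpa using tendsto_nhdsWithin_of_tendsto_nhds this
    · have : Tendsto (fun k => g k / k / 2) (𝓝[≠] (0:ℝ)) (𝓝 (c / 2)) :=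
        gslope.div_const 2
      refine this.congr fun k => ?_
      rw [div_div, mul_comm]
  -- w = F k / k (with value 1/h0 at 0)
  set w : ℝ → ℝ := fun k => if k = 0 then h0⁻¹ else F k / k with hw
  have hvw : v = fun k => (w k)⁻¹ := by
    funext k
    by_cases hk : k = 0
    · simp [hw, hk, hv0, hh0]
    · simp only [hw, hk, if_neg hk]
      rw [hvk k hk, inv_div]
  have wderiv : HasDerivAt w (c / 2) 0 := by
    rw [hasDerivAt_iff_tendsto_slope]
    refine hlim.congr' ?_
    filter_upwards [self_mem_nhdsWithin] with k hk
    have hk' : (k:ℝ) ≠ 0 := by simpa using hk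
    have : w k = F k / k := by simp [hw, hk']
    rw [slope_def_field, this]
    simp only [hw, if_pos rfl]
    have h2 : F k / k - h0⁻¹ = (F k - k * h0⁻¹) / k := by rw [sub_div, mul_div_cancel_left₀ _ hk']
    rw [sub_zero, GF k, h2, div_div, sq]
  have : HasDerivAt (fun k => (w k)⁻¹) (-(c / 2) / (w 0) ^ 2) 0 := by
    apply wderiv.inv
    simp [hw, h0ne]
  rw [hvw]
  convert this using 1
  simp only [hw, if_pos rfl, hc]
  field_simp
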